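/- Let m > 0, a ∈ ℝ, j ∈ {−1, 1}, and let Y : ℝ → ℝ be twice differentiable with Y''(z) + m·Y(z) = 0 for all z ∈ ℝ, Y(a) = 0, and Y'(a) ≠ 0. Then for every z ∈ ℝ with 0 < j·(z − a) < π/√m, one has T_j(z) = a, where T_j(z) = z − (1/√m)·arctan_j(√m·Y(z)/Y'(z)) if Y'(z) ≠ 0 and T_j(z) = z − jπ/(2√m) if Y'(z) = 0. (The fixed point method is exact when the coefficient Ω of the ODE is constant.) -/

import Mathlib

/-- The branch-corrected arctangent: `arctan_j(ζ) = arctan ζ` if `j·ζ > 0`,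
and `arctan ζ + j·π` otherwise. -/
noncomputable def arctanJ (j ζ : ℝ) : ℝ :=
  if j * ζ > 0 then Real.arctan ζ else Real.arctan ζ + j * Real.pi

/-- The fixed point map associated to the ODE `Y'' + Ω·Y = 0` in normal form. -/
noncomputable def Tmap (Ω Y Y' : ℝ → ℝ) (j z : ℝ) : ℝ :=
  if Y' z = 0 then z - j * Real.pi / (2 * Real.sqrt (Ω z))
  else z - (1 / Real.sqrt (Ω z)) * arctanJ j (Real.sqrt (Ω z) * Y z / Y' z)

lemma arctanJ_tan_key {φ : ℝ} (h1 : 0 < φ) (h2 : φ < Real.pi) (hc : Real.cos φ ≠ 0) :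
    arctanJ 1 (Real.tan φ) = φ := by
  have hpi := Real.pi_pos
  have hsin : 0 < Real.sin φ := Real.sin_pos_of_pos_of_lt_pi h1 h2
  unfold arctanJ
  by_cases ht : Real.tan φ > 0
  · rw [if_pos (by simpa using ht)]
    have hcos : 0 < Real.cos φ := by
      rcases lt_or_gt_of_ne hc with h | h
      · exfalso
        have hlt : Real.sin φ / Real.cos φ < 0 := div_neg_of_pos_of_neg hsin h
        rw [Real.tan_eq_sin_div_cos] at ht
        linarith
      · exact h
    have hlt : φ < Real.pi / 2 := by
      by_contra hge
      push_neg at hge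
      have := Real.cos_nonpos_of_pi_div_two_le_of_le hge (by linarith)
      linarith
    exact Real.arctan_tan (by linarith) hlt
  · rw [if_neg (by simpa using ht)]
    push_neg at ht
    have hcos : Real.cos φ < 0 := by
      rcases lt_or_gt_of_ne hc with h | h
      · exact h
      · exfalso
        have : 0 < Real.sin φ / Real.cos φ := div_pos hsin h
        rw [Real.tan_eq_sin_div_cos] at ht
        linarith
    have hgt : Real.pi / 2 < φ := by
      by_contra hle
      push_neg at hle
      have := Real.cos_nonneg_of_mem_Icc ⟨by linarith, hle⟩
      linarith
    have htan : Real.tan (φ - Real.pi) = Real.tan φ := Real.tan_periodic.sub_eq φ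
    have : Real.arctan (Real.tan φ) = φ - Real.pi := by
      rw [← htan]
      exact Real.arctan_tan (by linarith) (by linarith)
    rw [this]; ring

lemma arctanJ_neg (x : ℝ) : arctanJ (-1) (-x) = -(arctanJ 1 x) := by
  unfold arctanJ
  have h1 : (-1 : ℝ) * (-x) = x := by ring
  rw [h1, one_mul, Real.arctan_neg]
  by_cases h : x > 0
  · rw [if_pos h, if_pos h]
  · rw [if_neg h, if_neg h]; ring

theorem stmt_1 (m a j : ℝ) (hm : 0 < m) (hj : j = 1 ∨ j = -1)
    (Y Y' Y'' : ℝ → ℝ)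
    (hY1 : ∀ z, HasDerivAt Y (Y' z) z)
    (hY2 : ∀ z, HasDerivAt Y' (Y'' z) z)
    (hODE : ∀ z, Y'' z + m * Y z = 0)
    (hYa : Y a = 0) (hYa' : Y' a ≠ 0)
    (z : ℝ) (hz1 : 0 < j * (z - a)) (hz2 : j * (z - a) < Real.pi / Real.sqrt m) :
    Tmap (fun _ => m) Y Y' j z = a := by
  have hpi := Real.pi_pos
  set r := Real.sqrt m with hr
  have hr0 : 0 < r := Real.sqrt_pos.mpr hm
  have hr2 : r ^ 2 = m := Real.sq_sqrt hm.le
  have hj2 : j * j = 1 := by rcases hj with h | h <;> rw [h] <;> norm_num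
  set s := fun x : ℝ => Real.sin (r * (x - a)) with hs_def
  set c := fun x : ℝ => Real.cos (r * (x - a)) with hc_def
  have hg : ∀ x : ℝ, HasDerivAt (fun x => r * (x - a)) r x := fun x => by
    simpa using ((hasDerivAt_id x).sub_const a).const_mul r
  have hs : ∀ x : ℝ, HasDerivAt s (c x * r) x := fun x => (hg x).sin
  have hc : ∀ x : ℝ, HasDerivAt c (-s x * r) x := fun x => (hg x).cos
  set W1 := fun x : ℝ => Y' x * s x - r * (Y x * c x) with hW1_def
  set W2 := fun x : ℝ => Y' x * c x + r * (Y x * s x) with hW2_def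
  have hW1 : ∀ x, HasDerivAt W1 0 x := by
    intro x
    have h := ((hY2 x).mul (hs x)).sub (((hY1 x).mul (hc x)).const_mul r)
    refine h.congr_deriv ?_
    symm
    linear_combination (-(s x)) * hODE x - (Y x * s x) * hr2
  have hW2 : ∀ x, HasDerivAt W2 0 x := by
    intro x
    have h := ((hY2 x).mul (hc x)).add (((hY1 x).mul (hs x)).const_mul r)
    refine h.congr_deriv ?_
    symm
    linear_combination (-(c x)) * hODE x - (Y x * c x) * hr2
  have hW1c : W1 z = W1 a :=
    is_const_of_deriv_eq_zero (fun x => (hW1 x).differentiableAt)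
      (fun x => (hW1 x).deriv) z a
  have hW2c : W2 z = W2 a :=
    is_const_of_deriv_eq_zero (fun x => (hW2 x).differentiableAt)
      (fun x => (hW2 x).deriv) z a
  have hsa : s a = 0 := by simp [hs_def]
  have hca : c a = 1 := by simp [hc_def]
  have eq1 : Y' z * s z - r * (Y z * c z) = 0 := by
    rw [show Y' z * s z - r * (Y z * c z) = W1 z from rfl, hW1c]
    simp [hW1_def, hsa, hca, hYa]
  have eq2 : Y' z * c z + r * (Y z * s z) = Y' a := by
    rw [show Y' z * c z + r * (Y z * s z) = W2 z from rfl, hW2c]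
    simp [hW2_def, hsa, hca, hYa]
  have hpyth : s z ^ 2 + c z ^ 2 = 1 := Real.sin_sq_add_cos_sq _
  have hYp : Y' z = Y' a * c z := by
    linear_combination (s z) * eq1 + (c z) * eq2 - (Y' z) * hpyth
  have hYs : r * Y z = Y' a * s z := by
    linear_combination (s z) * eq2 - (c z) * eq1 - (r * Y z) * hpyth
  -- bounds on θ := r * (z - a)
  rw [lt_div_iff₀ hr0] at hz2
  have hθ1 : 0 < j * (r * (z - a)) := by nlinarith
  have hθ2 : j * (r * (z - a)) < Real.pi := by nlinarith
  clear hW1c hW2c hW1 hW2 hg hs hc hY1 hY2 hODE hsa hca hz1 hz2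
  clear hW1_def hW2_def
  clear_value W1 W2
  clear W1 W2
  by_cases hY'z : Y' z = 0
  · -- then cos θ = 0 and j·θ = π/2
    have hcz : c z = 0 := by
      have h1 : r * (Y z * c z) = 0 := by rw [hY'z] at eq1; linarith
      have h2 : Y z ≠ 0 := by
        intro h
        rw [hY'z, h] at eq2
        simp at eq2
        exact hYa' eq2.symm
      rcases mul_eq_zero.mp h1 with h | h
      · exact absurd h (ne_of_gt hr0)
      · rcases mul_eq_zero.mp h with h | h
        · exact absurd h h2
        · exact h
    have hcjz : Real.cos (j * (r * (z - a))) = 0 := by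
      rcases hj with h | h <;> rw [h] <;> simpa [hc_def] using hcz
    rw [Real.cos_eq_zero_iff] at hcjz
    obtain ⟨n, hn⟩ := hcjz
    have hb1 : (0 : ℤ) < 2 * n + 1 := by
      have : (0 : ℝ) < 2 * (n : ℝ) + 1 := by
        rw [hn] at hθ1; nlinarith
      exact_mod_cast this
    have hb2 : (2 * n + 1 : ℤ) < 2 := by
      have : (2 * (n : ℝ) + 1) < 2 := by
        rw [hn] at hθ2; nlinarith
      exact_mod_cast this
    have hn0 : n = 0 := by omega
    rw [hn0] at hn
    have hrza : r * (z - a) = j * (Real.pi / 2) := by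
      have hn' : j * (r * (z - a)) = Real.pi / 2 := by
        rw [hn]; push_cast; ring
      linear_combination j * hn' - (r * (z - a)) * hj2
    have hT : Tmap (fun _ => m) Y Y' j z = z - j * Real.pi / (2 * r) := by
      unfold Tmap
      rw [if_pos hY'z, ← hr]
    rw [hT]
    have h2r : (2 * r) ≠ 0 := by positivity
    field_simp
    linear_combination 2 * hrza
  · have hcz : c z ≠ 0 := by
      intro h
      have hsz : s z ^ 2 = 1 := by rw [h] at hpyth; linarith
      have h0 : Y' z * s z = 0 := by rw [h] at eq1; linarith
      rcases mul_eq_zero.mp h0 with h' | h'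
      · exact hY'z h'
      · rw [h'] at hsz; norm_num at hsz
    have hT : Tmap (fun _ => m) Y Y' j z
        = z - (1 / r) * arctanJ j (r * Y z / Y' z) := by
      unfold Tmap
      rw [if_neg hY'z, ← hr]
    rw [hT]
    have hYac : Y' a * c z ≠ 0 := by
      rw [← hYp]; exact hY'z
    have htan : r * Y z / Y' z = Real.tan (r * (z - a)) := by
      have hcz' : Real.cos (r * (z - a)) = c z := by rw [hc_def]
      have hsz' : Real.sin (r * (z - a)) = s z := by rw [hs_def]
      rw [Real.tan_eq_sin_div_cos, hcz', hsz', hYp, hYs]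
      rw [div_eq_div_iff hYac hcz]
      ring
    rw [htan]
    have harct : arctanJ j (Real.tan (r * (z - a))) = r * (z - a) := by
      have hcz'' : Real.cos (r * (z - a)) ≠ 0 := by rw [hc_def] at hcz; exact hcz
      rcases hj with h | h
      · subst h
        rw [one_mul] at hθ1 hθ2
        exact arctanJ_tan_key hθ1 hθ2 hcz''
      · subst h
        have hφ1 : 0 < -(r * (z - a)) := by linarith
        have hφ2 : -(r * (z - a)) < Real.pi := by linarith
        have hcφ : Real.cos (-(r * (z - a))) ≠ 0 := by rwa [Real.cos_neg]
        have htn : Real.tan (r * (z - a)) = -Real.tan (-(r * (z - a))) := by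
          rw [Real.tan_neg]; ring
        rw [htn, arctanJ_neg, arctanJ_tan_key hφ1 hφ2 hcφ]
        ring
    rw [harct]
    field_simp
    ring
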